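/- For each countable ordinal $\alpha$ and each $\lambda$, the oscillation sets of the generalized Schreier sequence $(x_n^\alpha)$ on $\mathcal{F}_\alpha$ coincide with the Cantor–Bendixson derived sets: $\mathcal{O}^\lambda(\epsilon, (x^\alpha_n), \mathcal{F}_\alpha) = \mathcal{F}_\alpha^{(\lambda)}$ for every $0 < \epsilon < 1$. In particular $\mathcal{O}^{\omega^\alpha}(\epsilon, (x^\alpha_n), \mathcal{F}_\alpha) = \{\emptyset\} \ne \emptyset$, so the oscillation index of $(x^\alpha_n)$ equals $\omega^\alpha$. The key step is: if $F \in \mathcal{F}_\alpha^{(\lambda+1)}$ then there exists $N$ such that $F \cup \{n\} \in \mathcal{F}_\alpha^{(\lambda)}$ for all $n \ge N$. -/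

import Mathlib

/-- Admissible unions of blocks: sets of the form `F₁ ∪ ⋯ ∪ F_n` with
`F_i ∈ F (g i)`, `n ≤ F₁ < F₂ < ⋯ < F_n` (conditions read on nonempty blocks,
equivalently every element is `≥ n` and blocks come in increasing order). -/
def schreierComb (F : Ordinal → Set (Finset ℕ)) (g : ℕ → Ordinal) :
    Set (Finset ℕ) :=
  {S | ∃ n : ℕ, 1 ≤ n ∧ ∃ f : Fin n → Finset ℕ,
    (∀ i : Fin n, f i ∈ F (g i.val)) ∧
    (∀ i : Fin n, ∀ m ∈ f i, n ≤ m) ∧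
    (∀ i j : Fin n, i < j → ∀ a ∈ f i, ∀ b ∈ f j, a < b) ∧
    S = Finset.univ.biUnion f}

/-- A system of generalized Schreier families `𝓕_α` for countable `α`:
`𝓕₀` is the singletons together with `∅`; for a successor `β+1` one uses the
constant sequence `α_i = β`; for a limit `α` a fixed strictly increasing
sequence `α_i ↑ α`. -/
def SchreierSystem (F : Ordinal → Set (Finset ℕ)) : Prop :=
  F 0 = insert ∅ {S : Finset ℕ | ∃ n : ℕ, S = {n}} ∧
  (∀ β : Ordinal, (β + 1).card ≤ Cardinal.aleph0 →
    F (β + 1) = schreierComb F (fun _ => β)) ∧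
  (∀ α : Ordinal, α.card ≤ Cardinal.aleph0 → Order.IsSuccLimit α →
    ∃ g : ℕ → Ordinal, StrictMono g ∧ (∀ i, g i < α) ∧ (⨆ i, g i) = α ∧
      F α = schreierComb F g)


/-- indicator embedding of a family of finite subsets of `ℕ` into `{0,1}^ℕ`. -/
def indFam (𝓐 : Set (Finset ℕ)) : Set (ℕ → Bool) :=
  {x | ∃ F ∈ 𝓐, ∀ m, x m = true ↔ m ∈ F}

/-- transfinite Cantor–Bendixson iteration starting from a given set. -/
noncomputable def cbIter {X : Type*} [TopologicalSpace X] (s : Set X)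
    (o : Ordinal.{0}) : Set X :=
  Ordinal.limitRecOn (motive := fun _ => Set X) o s (fun _ ih => derivedSet ih)
    (fun o _ ih => ⋂ b : {b : Ordinal.{0} // b < o}, ih b.1 b.2)

/-- Transfinite oscillation sets `𝓞^o(ε, (f_n), S)`. -/
noncomputable def oscSet {K : Type*} [TopologicalSpace K] (ε : ℝ)
    (f : ℕ → K → ℝ) (S : Set K) (o : Ordinal.{0}) : Set K :=
  Ordinal.limitRecOn (motive := fun _ => Set K) o S
    (fun _ D =>
      {k ∈ D | ∀ U ∈ nhds k, ∃ N : ℕ, ∀ n ≥ N, ∃ M : ℕ,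
        ((⋂ m ∈ Set.Ici M, {k' : K | ε < f n k' - f m k'}) ∩ D ∩ U).Nonempty ∨
        ((⋂ m ∈ Set.Ici M, {k' : K | f n k' - f m k' < -ε}) ∩ D ∩ U).Nonempty})
    (fun o _ ih => ⋂ b : {b : Ordinal.{0} // b < o}, ih b.1 b.2)


namespace S18
open Ordinal

abbrev Fam := Set (Finset ℕ)

def Hered (G : Fam) : Prop := ∀ S ∈ G, ∀ T, T ⊆ S → T ∈ G

def Spread (G : Fam) : Prop :=
  ∀ h : ℕ → ℕ, StrictMono h → (∀ m, m ≤ h m) → ∀ S ∈ G, S.image h ∈ G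

def der (G : Fam) : Fam :=
  {S | S ∈ G ∧ ∀ N : ℕ, ∃ n, N ≤ n ∧ (∀ s ∈ S, s < n) ∧ insert n S ∈ G}

noncomputable def derIter (G : Fam) (o : Ordinal.{0}) : Fam :=
  Ordinal.limitRecOn (motive := fun _ => Fam) o G (fun _ ih => der ih)
    (fun o _ ih => ⋂ b : {b : Ordinal.{0} // b < o}, ih b.1 b.2)

@[simp] theorem derIter_zero (G : Fam) : derIter G 0 = G :=
  Ordinal.limitRecOn_zero ..

theorem derIter_succ (G : Fam) (o : Ordinal) :
    derIter G (o + 1) = der (derIter G o) := by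
  rw [derIter, Ordinal.add_one_eq_succ, Ordinal.limitRecOn_succ]
  rfl

theorem derIter_limit (G : Fam) {o : Ordinal} (ho : Order.IsSuccLimit o) :
    derIter G o = ⋂ b : {b : Ordinal.{0} // b < o}, derIter G b.1 :=
  Ordinal.limitRecOn_limit _ _ _ _ ho

theorem mem_derIter_limit {G : Fam} {o : Ordinal} (ho : Order.IsSuccLimit o) {S : Finset ℕ} :
    S ∈ derIter G o ↔ ∀ b < o, S ∈ derIter G b := by
  rw [derIter_limit G ho]
  constructor
  · intro h b hb; exact Set.mem_iInter.1 h ⟨b, hb⟩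
  · intro h; exact Set.mem_iInter.2 fun b => h b.1 b.2

theorem der_subset (G : Fam) : der G ⊆ G := fun _ h => h.1

theorem derIter_anti (G : Fam) : ∀ {b : Ordinal} {a : Ordinal}, a ≤ b →
    derIter G b ⊆ derIter G a := by
  intro b
  induction b using Ordinal.induction with
  | h b IH =>
    intro a hab
    rcases Ordinal.zero_or_succ_or_isSuccLimit b with h0 | ⟨c, rfl⟩ | hl
    · subst h0
      rw [nonpos_iff_eq_zero] at hab; subst hab; exact subset_rfl
    · rcases eq_or_lt_of_le hab with rfl | hlt
      · exact subset_rfl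
      · have hac : a ≤ c := Order.lt_succ_iff.1 hlt
        rw [← Ordinal.add_one_eq_succ, derIter_succ]
        exact (der_subset _).trans (IH c (Order.lt_succ c) hac)
    · rcases eq_or_lt_of_le hab with rfl | hlt
      · exact subset_rfl
      · rw [derIter_limit G hl]
        exact Set.iInter_subset_of_subset ⟨a, hlt⟩ subset_rfl

theorem derIter_subset (G : Fam) (o : Ordinal) : derIter G o ⊆ G := by
  have := derIter_anti G (zero_le : (0 : Ordinal) ≤ o)
  simpa using this

theorem der_mono {G H : Fam} (h : G ⊆ H) : der G ⊆ der H := by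
  rintro S ⟨h1, h2⟩
  exact ⟨h h1, fun N => by
    obtain ⟨n, hn, hs, hins⟩ := h2 N
    exact ⟨n, hn, hs, h hins⟩⟩

theorem derIter_mono {G H : Fam} (h : G ⊆ H) : ∀ o : Ordinal,
    derIter G o ⊆ derIter H o := by
  intro o
  induction o using Ordinal.induction with
  | h o IH =>
    rcases Ordinal.zero_or_succ_or_isSuccLimit o with h0 | ⟨c, rfl⟩ | hl
    · subst h0; simpa using h
    · rw [← Ordinal.add_one_eq_succ, derIter_succ, derIter_succ]
      exact der_mono (IH c (Order.lt_succ c))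
    · intro S hS
      rw [mem_derIter_limit hl] at hS ⊢
      exact fun b hb => IH b hb (hS b hb)

theorem Hered.der {G : Fam} (hG : Hered G) : Hered (der G) := by
  rintro S ⟨hSG, hw⟩ T hTS
  refine ⟨hG S hSG T hTS, fun N => ?_⟩
  obtain ⟨n, hn, hs, hins⟩ := hw N
  exact ⟨n, hn, fun s hs' => hs s (hTS hs'),
    hG _ hins _ (Finset.insert_subset_insert _ hTS)⟩

theorem Hered.derIter {G : Fam} (hG : Hered G) : ∀ o : Ordinal, Hered (derIter G o) := by
  intro o
  induction o using Ordinal.induction with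
  | h o IH =>
    rcases Ordinal.zero_or_succ_or_isSuccLimit o with h0 | ⟨c, rfl⟩ | hl
    · subst h0; simpa using hG
    · rw [← Ordinal.add_one_eq_succ, derIter_succ]
      exact (IH c (Order.lt_succ c)).der
    · intro S hS T hTS
      rw [mem_derIter_limit hl] at hS ⊢
      exact fun b hb => IH b hb _ (hS b hb) T hTS

/-- key spreading helper: replace the top element by any larger one. -/
theorem Spread.insert_ge {G : Fam} (hG : Spread G) {S : Finset ℕ} {m : ℕ}
    (hmem : insert m S ∈ G) (hs : ∀ s ∈ S, s < m) {k : ℕ} (hk : m ≤ k) :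
    insert k S ∈ G := by
  set h : ℕ → ℕ := fun x => if x < m then x else x + (k - m) with hh
  have hmono : StrictMono h := by
    intro x y hxy
    simp only [hh]
    split_ifs with h1 h2 h2 <;> omega
  have hge : ∀ x, x ≤ h x := by intro x; simp only [hh]; split_ifs <;> omega
  have := hG h hmono hge _ hmem
  rwa [Finset.image_insert, show h m = k by simp only [hh]; split_ifs <;> omega,
    show S.image h = S from ?_] at this
  · rw [Finset.image_congr (g := id), Finset.image_id]
    intro x hx
    simp only [hh, id_eq]
    have := hs x hx
    split_ifs <;> omega

theorem Spread.der {G : Fam} (hG : Spread G) : Spread (der G) := by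
  rintro h hmono hge S ⟨hSG, hw⟩
  refine ⟨hG h hmono hge S hSG, fun N => ?_⟩
  -- get a witness m beyond max S
  obtain ⟨m, hm, hs, hins⟩ := hw ((S.sup id) + 1)
  -- choose target j large
  set j : ℕ := max N (max m ((insert m S).sup h + 1)) with hj
  have hjm : m ≤ j := le_trans (le_max_left _ _) (le_max_right _ _)
  -- H maps insert m S to insert j (S.image h)
  set H : ℕ → ℕ := fun x => if x < m then h x else j + (x - m) with hH
  have hsm : ∀ s ∈ S, s < m := fun s hsS => by have := hs s hsS; omega
  have hhj : ∀ s ∈ S, h s < j := by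
    intro s hsS
    have : h s ≤ (insert m S).sup h := Finset.le_sup (by simp [hsS])
    omega
  have hmj : h m < j := by
    have : h m ≤ (insert m S).sup h := Finset.le_sup (by simp)
    omega
  have hHmono : StrictMono H := by
    intro x y hxy
    simp only [hH]
    split_ifs with h1 h2 h2
    · exact hmono hxy
    · have : h x < h m := hmono (by omega)
      omega
    · omega
    · omega
  have hHge : ∀ x, x ≤ H x := by
    intro x; simp only [hH]; split_ifs with h1
    · exact hge x
    · omega
  have himg : (insert m S).image H = insert j (S.image h) := by
    rw [Finset.image_insert, show H m = j by simp only [hH]; split_ifs <;> omega]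
    congr 1
    apply Finset.image_congr
    intro x hx
    simp only [hH]
    rw [if_pos (hsm x hx)]
  refine ⟨j, le_trans (le_max_left _ _) le_rfl, ?_, ?_⟩
  · intro s hsS
    simp only [Finset.mem_image] at hsS
    obtain ⟨x, hx, rfl⟩ := hsS
    exact hhj x hx
  · rw [← himg]
    exact hG H hHmono hHge _ hins

theorem Spread.derIter {G : Fam} (hG : Spread G) : ∀ o : Ordinal, Spread (derIter G o) := by
  intro o
  induction o using Ordinal.induction with
  | h o IH =>
    rcases Ordinal.zero_or_succ_or_isSuccLimit o with h0 | ⟨c, rfl⟩ | hl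
    · subst h0; simpa using hG
    · rw [← Ordinal.add_one_eq_succ, derIter_succ]
      exact (IH c (Order.lt_succ c)).der
    · intro h hmono hge S hS
      rw [mem_derIter_limit hl] at hS ⊢
      exact fun b hb => IH b hb h hmono hge S (hS b hb)

/-- restriction of a family to sets with all elements `≥ N`. -/
def rmin (G : Fam) (N : ℕ) : Fam := {S | S ∈ G ∧ ∀ s ∈ S, N ≤ s}

theorem derIter_rmin {G : Fam} {N : ℕ} : ∀ o : Ordinal, ∀ S ∈ derIter G o,
    (∀ s ∈ S, N ≤ s) → S ∈ derIter (rmin G N) o := by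
  intro o
  induction o using Ordinal.induction with
  | h o IH =>
    intro S hS hSN
    rcases Ordinal.zero_or_succ_or_isSuccLimit o with h0 | ⟨c, rfl⟩ | hl
    · subst h0
      simp only [derIter_zero] at hS ⊢
      exact ⟨hS, hSN⟩
    · rw [← Ordinal.add_one_eq_succ, derIter_succ] at hS ⊢
      obtain ⟨hS1, hw⟩ := hS
      refine ⟨IH c (Order.lt_succ c) S hS1 hSN, fun N' => ?_⟩
      obtain ⟨n, hn, hs, hins⟩ := hw (max N N')
      refine ⟨n, by omega, hs, IH c (Order.lt_succ c) _ hins ?_⟩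
      intro s hsmem
      rcases Finset.mem_insert.1 hsmem with rfl | hsS
      · omega
      · exact hSN s hsS
    · rw [mem_derIter_limit hl] at hS ⊢
      exact fun b hb => IH b hb S (hS b hb) hSN

/-- grafting: a fixed bottom set `S` joined with families living above `M`. -/
theorem graft {H C : Fam} {S : Finset ℕ} {M : ℕ}
    (hSM : ∀ s ∈ S, s < M)
    (hHM : ∀ T ∈ H, ∀ t ∈ T, M ≤ t)
    (hjoin : ∀ T ∈ H, S ∪ T ∈ C) :
    ∀ o : Ordinal, ∀ T ∈ derIter H o, S ∪ T ∈ derIter C o := by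
  intro o
  induction o using Ordinal.induction with
  | h o IH =>
    intro T hT
    rcases Ordinal.zero_or_succ_or_isSuccLimit o with h0 | ⟨c, rfl⟩ | hl
    · subst h0; simp only [derIter_zero] at hT ⊢; exact hjoin T hT
    · rw [← Ordinal.add_one_eq_succ, derIter_succ] at hT ⊢
      obtain ⟨hT1, hw⟩ := hT
      refine ⟨IH c (Order.lt_succ c) T hT1, fun N => ?_⟩
      obtain ⟨n, hn, hs, hins⟩ := hw N
      have hnM : M ≤ n := by
        have := hHM _ (derIter_subset H c hins) n (Finset.mem_insert_self _ _)
        exact this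
      refine ⟨n, hn, ?_, ?_⟩
      · intro s hsmem
        rcases Finset.mem_union.1 hsmem with hsS | hsT
        · have := hSM s hsS; omega
        · exact hs s hsT
      · rw [show insert n (S ∪ T) = S ∪ insert n T by
          ext x; simp only [Finset.mem_insert, Finset.mem_union]; tauto]
        exact IH c (Order.lt_succ c) _ hins
    · rw [mem_derIter_limit hl] at hT ⊢
      exact fun b hb => IH b hb T (hT b hb)

/-- `n`-block unions with `i`-th block in `F (g i)` and all elements `≥ N`. -/
def combN (F : Ordinal → Fam) (g : ℕ → Ordinal) (n N : ℕ) : Fam :=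
  {S | ∃ f : ℕ → Finset ℕ,
    (∀ i, i < n → f i ∈ F (g i)) ∧
    (∀ i, ∀ m ∈ f i, N ≤ m) ∧
    (∀ i j, i < j → ∀ a ∈ f i, ∀ b ∈ f j, a < b) ∧
    S = (Finset.range n).biUnion f}

noncomputable def vsum (g : ℕ → Ordinal) : ℕ → Ordinal
  | 0 => 0
  | k + 1 => ω ^ (g k) + vsum g k

theorem vsum_shift (g : ℕ → Ordinal) : ∀ n,
    vsum g (n + 1) = vsum (fun i => g (i + 1)) n + ω ^ (g 0) := by
  intro n
  induction n with
  | zero => simp [vsum]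
  | succ n IH =>
    show ω ^ (g (n+1)) + vsum g (n+1) = _
    rw [IH]
    show _ = ω ^ ((fun i => g (i+1)) n) + vsum (fun i => g (i+1)) n + ω ^ (g 0)
    simp only []
    rw [← add_assoc]

theorem rmin_subset_combN_one {F : Ordinal → Fam} {g : ℕ → Ordinal} {N : ℕ} :
    rmin (F (g 0)) N ⊆ combN F g 1 N := by
  rintro S ⟨hS, hSN⟩
  refine ⟨fun i => if i = 0 then S else ∅, ?_, ?_, ?_, ?_⟩
  · intro i hi
    interval_cases i
    simpa using hS
  · intro i m hm
    by_cases h : i = 0 <;> simp [h] at hm ⊢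
    · exact hSN m hm
  · intro i j hij a ha b hb
    by_cases h1 : i = 0 <;> by_cases h2 : j = 0 <;> simp [h1, h2] at ha hb <;> omega
  · simp

theorem combN_lb (F : Ordinal → Fam) : ∀ n : ℕ, ∀ g : ℕ → Ordinal,
    (∀ i N lam, lam ≤ ω ^ (g i) → ∅ ∈ derIter (rmin (F (g i)) N) lam) →
    ∀ N lam (S : Finset ℕ), S ∈ derIter (rmin (F (g 0)) N) lam →
    S ∈ derIter (combN F g (n + 1) N) (vsum (fun i => g (i + 1)) n + lam) := by
  intro n
  induction n with
  | zero =>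
    intro g _ N lam S hS
    have h := derIter_mono rmin_subset_combN_one lam hS
    simpa [vsum] using h
  | succ n IHn =>
    intro g hbase N lam
    induction lam using Ordinal.induction with
    | h lam IH =>
      intro S hS
      rcases Ordinal.zero_or_succ_or_isSuccLimit lam with h0 | ⟨c, rfl⟩ | hl
      · subst h0
        rw [add_zero]
        rw [derIter_zero] at hS
        obtain ⟨hSmem, hSN⟩ := hS
        -- graft an (n+1)-block comb above S
        set M : ℕ := max N (S.sup id + 1) with hM
        have hSM : ∀ s ∈ S, s < M := by
          intro s hs
          have : s ≤ S.sup id := Finset.le_sup (f := id) hs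
          omega
        have hHM : ∀ T ∈ combN F (fun i => g (i + 1)) (n + 1) M, ∀ t ∈ T, M ≤ t := by
          rintro T ⟨f, hf1, hf2, hf3, rfl⟩ t ht
          simp only [Finset.mem_biUnion] at ht
          obtain ⟨i, _, hti⟩ := ht
          exact hf2 i t hti
        have hjoin : ∀ T ∈ combN F (fun i => g (i + 1)) (n + 1) M,
            S ∪ T ∈ combN F g (n + 2) N := by
          rintro T ⟨f, hf1, hf2, hf3, rfl⟩
          refine ⟨fun i => if i = 0 then S else f (i - 1), ?_, ?_, ?_, ?_⟩
          · intro i hi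
            rcases Nat.eq_zero_or_pos i with rfl | hpos
            · simpa using hSmem
            · have h1 : i - 1 < n + 1 := by omega
              have h2 := hf1 (i - 1) h1
              simp only [if_neg (by omega : ¬ i = 0)]
              have h3 : i - 1 + 1 = i := by omega
              simpa [h3] using h2
          · intro i m hm
            by_cases h : i = 0
            · simp only [h, if_pos rfl] at hm; exact hSN m hm
            · simp only [if_neg h] at hm
              have := hf2 (i - 1) m hm
              have hMN : N ≤ M := le_max_left _ _
              omega
          · intro i j hij a ha b hb
            by_cases h1 : i = 0
            · simp only [h1, if_pos rfl] at ha
              have h2 : ¬ j = 0 := by omega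
              simp only [if_neg h2] at hb
              have hbM := hf2 (j - 1) b hb
              have := hSM a ha
              omega
            · have h2 : ¬ j = 0 := by omega
              simp only [if_neg h1] at ha
              simp only [if_neg h2] at hb
              exact hf3 (i - 1) (j - 1) (by omega) a ha b hb
          · ext x
            simp only [Finset.mem_union, Finset.mem_biUnion, Finset.mem_range]
            constructor
            · rintro (hx | ⟨i, hi, hx⟩)
              · exact ⟨0, by omega, by simpa using hx⟩
              · exact ⟨i + 1, by omega, by simpa using hx⟩
            · rintro ⟨i, hi, hx⟩
              by_cases h : i = 0
              · left; rwa [h, if_pos rfl] at hx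
              · right
                rw [if_neg h] at hx
                exact ⟨i - 1, by omega, hx⟩
        have hbase' : ∀ i N' lam', lam' ≤ ω ^ ((fun j => g (j + 1)) i) →
            ∅ ∈ derIter (rmin (F ((fun j => g (j + 1)) i)) N') lam' :=
          fun i N' lam' h => hbase (i + 1) N' lam' h
        have hempty : (∅ : Finset ℕ) ∈
            derIter (rmin (F (g 1)) M) (ω ^ (g 1)) := hbase 1 M _ le_rfl
        have := IHn (fun i => g (i + 1)) hbase' M (ω ^ (g 1)) ∅ hempty
        rw [← vsum_shift (fun i => g (i + 1)) n] at this
        have := graft hSM hHM hjoin _ _ this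
        rwa [Finset.union_empty] at this
      · rw [← Ordinal.add_one_eq_succ] at hS ⊢
        rw [derIter_succ] at hS
        obtain ⟨hS1, hw⟩ := hS
        have goal_eq : vsum (fun i => g (i + 1)) (n + 1) + (c + 1) =
            (vsum (fun i => g (i + 1)) (n + 1) + c) + 1 := by rw [add_assoc]
        rw [goal_eq, derIter_succ]
        have hc : c < c + 1 := lt_add_one c
        refine ⟨IH c hc S hS1, fun N' => ?_⟩
        obtain ⟨m, hm, hs, hins⟩ := hw N'
        exact ⟨m, hm, hs, IH c hc _ hins⟩
      · have hlim : Order.IsSuccLimit (vsum (fun i => g (i + 1)) (n + 1) + lam) :=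
          Ordinal.isSuccLimit_add _ hl
        rw [mem_derIter_limit hl] at hS
        rw [mem_derIter_limit hlim]
        intro b hb
        rcases (Ordinal.lt_add_iff hl.pos.ne').1 hb with ⟨d, hd, hbd⟩
        exact derIter_anti _ hbd (IH d hd S (hS d hd))

/-- decomposition of `T` into exactly `a` blocks (possibly empty). -/
def IsDec (Fg : ℕ → Fam) (a : ℕ) (f : ℕ → Finset ℕ) (T : Finset ℕ) : Prop :=
  (∀ i, f i ∈ Fg i) ∧ (∀ i, a ≤ i → f i = ∅) ∧
  (∀ i j, i < j → ∀ x ∈ f i, ∀ y ∈ f j, x < y) ∧ T = (Finset.range a).biUnion f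

noncomputable def go (δ : ℕ → Ordinal) (ν' : ℕ → Finset ℕ → Ordinal)
    (f : ℕ → Finset ℕ) : ℕ → Ordinal
  | 0 => 0
  | k + 1 => if f k = ∅ then δ k + go δ ν' f k else ν' k (f k)

theorem go_congr {δ ν'} {f f' : ℕ → Finset ℕ} : ∀ {k}, (∀ j < k, f j = f' j) →
    go δ ν' f k = go δ ν' f' k := by
  intro k
  induction k with
  | zero => intro; rfl
  | succ k IH =>
    intro h
    show (if f k = ∅ then δ k + go δ ν' f k else ν' k (f k)) = _
    rw [h k (by omega), IH (fun j hj => h j (by omega))]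
    rfl

def vals (Fg : ℕ → Fam) (δ : ℕ → Ordinal) (ν' : ℕ → Finset ℕ → Ordinal)
    (a : ℕ) (T : Finset ℕ) : Set Ordinal :=
  {o | ∃ f, IsDec Fg a f T ∧ o = go δ ν' f a}

theorem blocks_subset {Fg a f T} (h : IsDec Fg a f T) : ∀ i, f i ⊆ T := by
  intro i
  by_cases hi : i < a
  · rw [h.2.2.2]
    exact Finset.subset_biUnion_of_mem f (Finset.mem_range.2 hi)
  · rw [h.2.1 i (by omega)]
    exact Finset.empty_subset _

theorem vals_finite (Fg δ ν' a T) : (vals Fg δ ν' a T).Finite := by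
  classical
  have : vals Fg δ ν' a T ⊆ Set.range
      (fun v : Fin a → {x // x ∈ T.powerset} =>
        go δ ν' (fun i => if h : i < a then (v ⟨i, h⟩ : Finset ℕ) else ∅) a) := by
    rintro o ⟨f, hf, rfl⟩
    refine ⟨fun i => ⟨f i.1, Finset.mem_powerset.2 (blocks_subset hf i.1)⟩, ?_⟩
    apply go_congr
    intro j hj
    simp [dif_pos hj]
  exact (Set.finite_range _).subset this

theorem go_lt {γ : Ordinal} {Fg : ℕ → Fam} {δ : ℕ → Ordinal} {ν' : ℕ → Finset ℕ → Ordinal} (hδγ : ∀ k, δ k < ω ^ γ)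
    (hν'b : ∀ k B, B ∈ Fg k → B ≠ ∅ → ν' k B < δ k)
    {f : ℕ → Finset ℕ} (hf : ∀ i, f i ∈ Fg i) :
    ∀ k, go δ ν' f k < ω ^ γ := by
  intro k
  induction k with
  | zero => exact opow_pos γ omega0_pos
  | succ k IH =>
    show (if f k = ∅ then δ k + go δ ν' f k else ν' k (f k)) < ω ^ γ
    split_ifs with h
    · exact principal_add_omega0_opow γ (hδγ k) IH
    · exact lt_trans (hν'b k (f k) (hf k) h) (hδγ k)

theorem min'_insert_top {T : Finset ℕ} (hT : T.Nonempty) {x : ℕ}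
    (hx : ∀ t ∈ T, t < x) :
    (insert x T).min' (Finset.insert_nonempty _ _) = T.min' hT := by
  apply le_antisymm
  · exact Finset.min'_le _ _ (Finset.mem_insert_of_mem (T.min'_mem hT))
  · apply Finset.le_min'
    intro y hy
    rcases Finset.mem_insert.1 hy with rfl | hyT
    · exact le_of_lt (hx _ (T.min'_mem hT))
    · exact Finset.min'_le _ _ hyT

theorem go_dec {Fg : ℕ → Fam} {δ : ℕ → Ordinal} {ν' : ℕ → Finset ℕ → Ordinal}
    (hher : ∀ k, Hered (Fg k))
    (hν'b : ∀ k B, B ∈ Fg k → B ≠ ∅ → ν' k B < δ k)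
    (hν'd : ∀ k B x, insert x B ∈ Fg k → x ∉ B → (∀ b ∈ B, b < x) →
      ν' k (insert x B) < ν' k B)
    {a : ℕ} {f' : ℕ → Finset ℕ} {T : Finset ℕ} {x : ℕ}
    (hx : x ∉ T) (hxT : ∀ t ∈ T, t < x)
    (hf' : IsDec Fg a f' (insert x T)) :
    ∃ f, IsDec Fg a f T ∧ go δ ν' f' a < go δ ν' f a := by
  classical
  obtain ⟨hm, hz, hinc, hu⟩ := hf'
  -- find the block containing x
  have hxmem : x ∈ (Finset.range a).biUnion f' := by rw [← hu]; exact Finset.mem_insert_self _ _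
  rw [Finset.mem_biUnion] at hxmem
  obtain ⟨i, hia, hxi⟩ := hxmem
  rw [Finset.mem_range] at hia
  -- blocks above i are empty
  have habove : ∀ j, i < j → f' j = ∅ := by
    intro j hij
    by_cases hja : j < a
    · by_contra hne
      obtain ⟨y, hy⟩ := Finset.nonempty_iff_ne_empty.2 hne
      have h1 : x < y := hinc i j hij x hxi y hy
      have h2 : y ∈ insert x T := by
        rw [hu]; exact Finset.mem_biUnion.2 ⟨j, Finset.mem_range.2 hja, hy⟩
      rcases Finset.mem_insert.1 h2 with rfl | h3
      · omega
      · have := hxT y h3; omega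
    · exact hz j (by omega)
  set f : ℕ → Finset ℕ := fun j => if j = i then (f' i).erase x else f' j with hfdef
  have hsub : ∀ j, f j ⊆ f' j := by
    intro j
    by_cases hj : j = i
    · simp [hfdef, hj, Finset.erase_subset]
    · simp [hfdef, hj]
  have hfdec : IsDec Fg a f T := by
    refine ⟨?_, ?_, ?_, ?_⟩
    · intro j
      by_cases hj : j = i
      · subst hj
        exact hher j _ (hm j) _ (by simp [hfdef, Finset.erase_subset])
      · simpa [hfdef, hj] using hm j
    · intro j hja
      have : j ≠ i := by omega
      simp [hfdef, this, hz j hja]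
    · intro p q hpq y hy z hz'
      exact hinc p q hpq y (hsub p hy) z (hsub q hz')
    · ext y
      simp only [Finset.mem_biUnion, Finset.mem_range]
      constructor
      · intro hyT
        have : y ∈ insert x T := Finset.mem_insert_of_mem hyT
        rw [hu] at this
        obtain ⟨j, hj, hyj⟩ := Finset.mem_biUnion.1 this
        rw [Finset.mem_range] at hj
        refine ⟨j, hj, ?_⟩
        by_cases hji : j = i
        · subst hji
          simp only [hfdef, if_pos rfl, Finset.mem_erase]
          exact ⟨fun h => hx (h ▸ hyT), hyj⟩
        · simpa [hfdef, hji] using hyj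
      · rintro ⟨j, hj, hyj⟩
        have hyj' : y ∈ f' j := hsub j hyj
        have : y ∈ insert x T := by
          rw [hu]; exact Finset.mem_biUnion.2 ⟨j, Finset.mem_range.2 hj, hyj'⟩
        rcases Finset.mem_insert.1 this with rfl | hyT
        · exfalso
          by_cases hji : j = i
          · subst hji
            simp [hfdef] at hyj
          · rcases Nat.lt_or_ge j i with h | h
            · have := hinc j i h y hyj' y hxi; omega
            · have := hinc i j (by omega) y hxi y hyj'; omega
        · exact hyT
  refine ⟨f, hfdec, ?_⟩
  have hf'i_ne : f' i ≠ ∅ := by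
    intro h; rw [h] at hxi; simp at hxi
  -- compare at i+1
  have base : go δ ν' f' (i + 1) < go δ ν' f (i + 1) := by
    have lhs : go δ ν' f' (i + 1) = ν' i (f' i) := by
      show (if f' i = ∅ then _ else _) = _
      rw [if_neg hf'i_ne]
    rw [lhs]
    by_cases hcase : (f' i).erase x = ∅
    · have rhs : go δ ν' f (i + 1) = δ i + go δ ν' f i := by
        show (if f i = ∅ then δ i + go δ ν' f i else _) = _
        rw [if_pos (by simp [hfdef, hcase])]
      rw [rhs]
      refine lt_of_lt_of_le (hν'b i (f' i) (hm i) hf'i_ne) (le_self_add)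
    · have rhs : go δ ν' f (i + 1) = ν' i ((f' i).erase x) := by
        show (if f i = ∅ then _ else ν' i (f i)) = _
        rw [if_neg (by simp [hfdef, hcase]), hfdef]
        simp
      rw [rhs]
      have key := hν'd i ((f' i).erase x) x
        (by rw [Finset.insert_erase hxi]; exact hm i)
        (Finset.notMem_erase _ _)
        (by
          intro b hb
          have hb1 := Finset.mem_of_mem_erase hb
          have hb2 : b ≠ x := Finset.ne_of_mem_erase hb
          have : b ∈ insert x T := by
            rw [hu]; exact Finset.mem_biUnion.2 ⟨i, Finset.mem_range.2 hia, hb1⟩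
          rcases Finset.mem_insert.1 this with rfl | hbT
          · omega
          · exact hxT b hbT)
      rwa [Finset.insert_erase hxi] at key
  -- propagate up to a
  have prop : ∀ k, i + 1 ≤ k → k ≤ a → go δ ν' f' k < go δ ν' f k := by
    intro k
    induction k with
    | zero => omega
    | succ k IH =>
      intro h1 h2
      rcases Nat.lt_or_ge i k with hik | hik
      · -- k > i : both blocks at k are empty
        have hf'k : f' k = ∅ := habove k hik
        have hfk : f k = ∅ := by
          have : k ≠ i := by omega
          simp [hfdef, this, hf'k]
        have lhs : go δ ν' f' (k + 1) = δ k + go δ ν' f' k := by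
          show (if f' k = ∅ then _ else _) = _
          rw [if_pos hf'k]
        have rhs : go δ ν' f (k + 1) = δ k + go δ ν' f k := by
          show (if f k = ∅ then _ else _) = _
          rw [if_pos hfk]
        rw [lhs, rhs]
        exact (add_lt_add_iff_left (δ k)).2 (IH (by omega) (by omega))
      · -- k = i
        have : k = i := by omega
        subst this
        exact base
  exact prop a (by omega) le_rfl

/-- build a certificate for a family whose nonempty members decompose. -/
theorem cert_of_comb {γ : Ordinal} {G : Fam} {Fg : ℕ → Fam} {δ : ℕ → Ordinal}
    {ν' : ℕ → Finset ℕ → Ordinal}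
    (hδγ : ∀ k, δ k < ω ^ γ)
    (hher : ∀ k, Hered (Fg k))
    (hν'b : ∀ k B, B ∈ Fg k → B ≠ ∅ → ν' k B < δ k)
    (hν'd : ∀ k B x, insert x B ∈ Fg k → x ∉ B → (∀ b ∈ B, b < x) →
      ν' k (insert x B) < ν' k B)
    (hdec : ∀ T (hT : T ∈ G) (hne : T.Nonempty), ∃ f, IsDec Fg (T.min' hne) f T) :
    ∃ ν : Finset ℕ → Ordinal,
      (∀ B, B ∈ G → B ≠ ∅ → ν B < ω ^ γ) ∧
      (∀ B x, insert x B ∈ G → x ∉ B → (∀ b ∈ B, b < x) → ν (insert x B) < ν B) := by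
  classical
  set ν : Finset ℕ → Ordinal := fun T =>
    if h : T.Nonempty then sSup (vals Fg δ ν' (T.min' h) T) else ω ^ γ with hν
  have bound : ∀ B, B ∈ G → B ≠ ∅ → ν B < ω ^ γ := by
    intro B hB hBne
    have hne : B.Nonempty := Finset.nonempty_iff_ne_empty.2 hBne
    obtain ⟨f, hf⟩ := hdec B hB hne
    have hvne : (vals Fg δ ν' (B.min' hne) B).Nonempty := ⟨_, f, hf, rfl⟩
    have hvfin := vals_finite Fg δ ν' (B.min' hne) B
    have hmem := Set.Nonempty.csSup_mem hvne hvfin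
    obtain ⟨f₀, hf₀, heq⟩ := hmem
    rw [hν]
    simp only [dif_pos hne]
    rw [heq]
    exact go_lt hδγ hν'b hf₀.1 _
  refine ⟨ν, bound, ?_⟩
  intro B x hBx hxB hbx
  by_cases hBne : B.Nonempty
  · have hne' : (insert x B).Nonempty := Finset.insert_nonempty _ _
    have hmin : (insert x B).min' hne' = B.min' hBne := min'_insert_top hBne hbx
    obtain ⟨f'₀, hf'₀⟩ := hdec _ hBx hne'
    have hvne : (vals Fg δ ν' ((insert x B).min' hne') (insert x B)).Nonempty :=
      ⟨_, f'₀, hf'₀, rfl⟩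
    have hvfin := vals_finite Fg δ ν' ((insert x B).min' hne') (insert x B)
    have h1 : ν (insert x B) = sSup (vals Fg δ ν' ((insert x B).min' hne') (insert x B)) := by
      rw [hν]; simp only [dif_pos hne']
    have h2 : ν B = sSup (vals Fg δ ν' (B.min' hBne) B) := by
      rw [hν]; simp only [dif_pos hBne]
    rw [h1, h2]
    -- every value of insert x B is < some value of B
    have hsup := Set.Nonempty.csSup_mem hvne hvfin
    obtain ⟨f', hf', heq⟩ := hsup
    rw [heq, hmin]
    rw [hmin] at hf'
    obtain ⟨f, hf, hlt⟩ := go_dec hher hν'b hν'd hxB hbx hf'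
    calc go δ ν' f' (B.min' hBne) < go δ ν' f (B.min' hBne) := hlt
      _ ≤ sSup (vals Fg δ ν' (B.min' hBne) B) :=
        le_csSup (vals_finite Fg δ ν' (B.min' hBne) B).bddAbove ⟨f, hf, rfl⟩
  · have hB0 : B = ∅ := by
      rw [← Finset.not_nonempty_iff_eq_empty]; exact hBne
    have : ν B = ω ^ γ := by
      rw [hν]; simp only [dif_neg hBne]
    rw [this]
    exact bound _ hBx (by simp [hB0])

/-- a `schreierComb` membership yields an exact-`min`-block decomposition. -/
theorem isDec_of_schreier {F : Ordinal → Set (Finset ℕ)} {g : ℕ → Ordinal}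
    (hEmptyMem : ∀ i, ∅ ∈ F (g i)) {T : Finset ℕ}
    (hT : T ∈ schreierComb F g) (hne : T.Nonempty) :
    ∃ f, IsDec (fun i => F (g i)) (T.min' hne) f T := by
  classical
  obtain ⟨n, hn1, fF, hf1, hf2, hf3, hfu⟩ := hT
  have hna : n ≤ T.min' hne := by
    obtain ⟨i, -, hi⟩ := Finset.mem_biUnion.1
      (show T.min' hne ∈ Finset.univ.biUnion fF by rw [← hfu]; exact T.min'_mem hne)
    exact hf2 i _ hi
  refine ⟨fun j => if h : j < n then fF ⟨j, h⟩ else ∅, ?_, ?_, ?_, ?_⟩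
  · intro i
    by_cases h : i < n
    · simpa [dif_pos h] using hf1 ⟨i, h⟩
    · simpa [dif_neg h] using hEmptyMem i
  · intro i hi
    simp only [dif_neg (show ¬ i < n by omega)]
  · intro i j hij y hy z hz
    simp only [] at hy hz
    by_cases h1 : i < n
    · by_cases h2 : j < n
      · simp only [dif_pos h1] at hy
        simp only [dif_pos h2] at hz
        exact hf3 ⟨i, h1⟩ ⟨j, h2⟩ (by simpa using hij) y hy z hz
      · simp only [dif_neg h2] at hz; simp at hz
    · simp only [dif_neg h1] at hy; simp at hy
  · ext y
    conv_lhs => rw [hfu]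
    simp only [Finset.mem_biUnion, Finset.mem_range, Finset.mem_univ, true_and]
    constructor
    · rintro ⟨i, hi⟩
      refine ⟨i.1, by omega, ?_⟩
      simp only [dif_pos i.2]
      exact hi
    · rintro ⟨j, hj, hy⟩
      by_cases h : j < n
      · simp only [dif_pos h] at hy
        exact ⟨⟨j, h⟩, hy⟩
      · simp only [dif_neg h] at hy; simp at hy

theorem hered_comb {F : Ordinal → Fam} {g : ℕ → Ordinal}
    (hg : ∀ i, Hered (F (g i))) : Hered (schreierComb F g) := by
  rintro S ⟨n, hn1, f, hf1, hf2, hf3, rfl⟩ T hT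
  classical
  refine ⟨n, hn1, fun i => f i ∩ T, fun i => hg i.1 _ (hf1 i) _ Finset.inter_subset_left,
    fun i m hm => hf2 i m (Finset.mem_of_mem_inter_left hm),
    fun i j hij a ha b hb => hf3 i j hij a (Finset.mem_of_mem_inter_left ha)
      b (Finset.mem_of_mem_inter_left hb), ?_⟩
  ext y
  simp only [Finset.mem_biUnion, Finset.mem_univ, true_and, Finset.mem_inter]
  constructor
  · intro hy
    obtain ⟨i, hi⟩ := Finset.mem_biUnion.1 (hT hy)
    exact ⟨i, hi.2, hy⟩
  · rintro ⟨i, _, hy⟩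
    exact hy

theorem spread_comb {F : Ordinal → Fam} {g : ℕ → Ordinal}
    (hg : ∀ i, Spread (F (g i))) : Spread (schreierComb F g) := by
  rintro h hmono hge S ⟨n, hn1, f, hf1, hf2, hf3, rfl⟩
  refine ⟨n, hn1, fun i => (f i).image h, fun i => hg i.1 h hmono hge _ (hf1 i),
    ?_, ?_, ?_⟩
  · intro i m hm
    obtain ⟨x, hx, rfl⟩ := Finset.mem_image.1 hm
    exact le_trans (hf2 i x hx) (hge x)
  · intro i j hij a ha b hb
    obtain ⟨x, hx, rfl⟩ := Finset.mem_image.1 ha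
    obtain ⟨y, hy, rfl⟩ := Finset.mem_image.1 hb
    exact hmono (hf3 i j hij x hx y hy)
  · rw [Finset.biUnion_image]

theorem empty_mem_comb {F : Ordinal → Fam} {g : ℕ → Ordinal}
    (hg : ∅ ∈ F (g 0)) : (∅ : Finset ℕ) ∈ schreierComb F g := by
  refine ⟨1, le_rfl, fun _ => ∅, fun i => ?_, by simp, by simp, by simp⟩
  have : i.1 = 0 := by omega
  rw [this]
  exact hg

theorem combN_subset_schreier {F : Ordinal → Fam} {g : ℕ → Ordinal} {n N : ℕ}
    (hn : 1 ≤ n) (hNn : n ≤ N) : combN F g n N ⊆ schreierComb F g := by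
  rintro S ⟨f, hf1, hf2, hf3, rfl⟩
  refine ⟨n, hn, fun i => f i.1, fun i => hf1 i.1 i.2,
    fun i m hm => le_trans hNn (hf2 i.1 m hm),
    fun i j hij a ha b hb => hf3 i.1 j.1 hij a ha b hb, ?_⟩
  ext y
  simp only [Finset.mem_biUnion, Finset.mem_range, Finset.mem_univ, true_and]
  constructor
  · rintro ⟨j, hj, hy⟩
    exact ⟨⟨j, hj⟩, hy⟩
  · rintro ⟨i, hy⟩
    exact ⟨i.1, i.2, hy⟩

/-- single block from `F (g i)`, with all elements `≥ i+1`, as an `i+1`-block comb. -/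
theorem rmin_subset_schreier {F : Ordinal → Fam} {g : ℕ → Ordinal} (i : ℕ)
    (hEmptyMem : ∀ j, ∅ ∈ F (g j)) :
    {S | S ∈ F (g i) ∧ ∀ s ∈ S, i + 1 ≤ s} ⊆ schreierComb F g := by
  classical
  rintro S ⟨hS, hSN⟩
  refine ⟨i + 1, by omega, fun j => if j.1 = i then S else ∅, ?_, ?_, ?_, ?_⟩
  · intro j
    by_cases hj : j.1 = i
    · simp only [if_pos hj, hj]
      exact hS
    · simp only [if_neg hj]
      exact hEmptyMem j.1
  · intro j m hm
    by_cases hj : j.1 = i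
    · simp only [if_pos hj] at hm
      exact hSN m hm
    · simp only [if_neg hj] at hm
      simp at hm
  · intro p q hpq a ha b hb
    by_cases hp : p.1 = i
    · have hq : ¬ q.1 = i := by
        intro hq
        have : p = q := Fin.ext (by omega)
        rw [this] at hpq
        exact lt_irrefl _ hpq
      simp only [if_neg hq] at hb
      simp at hb
    · simp only [if_neg hp] at ha
      simp at ha
  · ext y
    simp only [Finset.mem_biUnion, Finset.mem_univ, true_and]
    constructor
    · intro hy
      exact ⟨⟨i, by omega⟩, by simp [hy]⟩
    · rintro ⟨j, hy⟩
      by_cases hj : j.1 = i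
      · simpa only [if_pos hj] using hy
      · simp only [if_neg hj] at hy
        simp at hy

theorem vsum_const (β : Ordinal) : ∀ k, vsum (fun _ => β) k = ω ^ β * k := by
  intro k
  induction k with
  | zero => simp [vsum]
  | succ k IH =>
    simp only [vsum]
    rw [IH]
    have h1 : ((k + 1 : ℕ) : Ordinal) = 1 + (k : ℕ) := by
      have h0 : (1 + k : ℕ) = k + 1 := Nat.add_comm 1 k
      rw [← h0, Nat.cast_add, Nat.cast_one]
    rw [h1, mul_add, mul_one]

/-- The main structural induction. -/
theorem main (F : Ordinal → Set (Finset ℕ)) (hF : SchreierSystem F) :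
    ∀ α : Ordinal.{0}, α.card ≤ Cardinal.aleph0 →
      Hered (F α) ∧ Spread (F α) ∧ (∅ : Finset ℕ) ∈ F α ∧
      (∀ lam, lam ≤ ω ^ α → (∅ : Finset ℕ) ∈ derIter (F α) lam) ∧
      ∃ ν : Finset ℕ → Ordinal,
        (∀ B, B ∈ F α → B ≠ ∅ → ν B < ω ^ α) ∧
        (∀ B x, insert x B ∈ F α → x ∉ B → (∀ b ∈ B, b < x) → ν (insert x B) < ν B) := by
  intro α
  induction α using Ordinal.induction with
  | h α IH =>
    intro hα
    rcases Ordinal.zero_or_succ_or_isSuccLimit α with h0 | ⟨β, rfl⟩ | hl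
    · -- α = 0
      subst h0
      have hmem : ∀ S : Finset ℕ, S ∈ F 0 ↔ S = ∅ ∨ ∃ n : ℕ, S = {n} := by
        intro S
        rw [hF.1]
        simp [Set.mem_insert_iff]
      have hEmp : (∅ : Finset ℕ) ∈ F 0 := (hmem ∅).2 (Or.inl rfl)
      refine ⟨?_, ?_, hEmp, ?_, ?_⟩
      · intro S hS T hT
        rcases (hmem S).1 hS with rfl | ⟨n, rfl⟩
        · rw [Finset.subset_empty] at hT
          subst hT; exact hEmp
        · rcases Finset.subset_singleton_iff.1 hT with rfl | rfl
          · exact hEmp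
          · exact hS
      · intro h hmono hge S hS
        rcases (hmem S).1 hS with rfl | ⟨n, rfl⟩
        · simpa using hEmp
        · rw [Finset.image_singleton]
          exact (hmem _).2 (Or.inr ⟨h n, rfl⟩)
      · intro lam hlam
        rw [opow_zero] at hlam
        rcases Ordinal.le_one_iff.1 hlam with rfl | rfl
        · rw [derIter_zero]; exact hEmp
        · rw [show (1 : Ordinal) = 0 + 1 by rw [zero_add], derIter_succ, derIter_zero]
          refine ⟨hEmp, fun N => ⟨N, le_rfl, by simp, ?_⟩⟩
          exact (hmem _).2 (Or.inr ⟨N, by simp⟩)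
      · refine ⟨fun B => if B = ∅ then 1 else 0, ?_, ?_⟩
        · intro B _ hBne
          show (if B = ∅ then (1 : Ordinal) else 0) < ω ^ (0 : Ordinal)
          rw [if_neg hBne, opow_zero]
          exact zero_lt_one
        · intro B x hBx hxB hbx
          by_cases hB : B = ∅
          · subst hB
            show (if insert x ∅ = ∅ then (1 : Ordinal) else 0) <
              if (∅ : Finset ℕ) = ∅ then (1 : Ordinal) else 0
            rw [if_neg (Finset.insert_ne_empty x ∅), if_pos rfl]
            exact zero_lt_one
          · exfalso
            rcases (hmem _).1 hBx with habs | ⟨n, habs⟩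
            · exact (Finset.insert_ne_empty _ _) habs
            · obtain ⟨b, hb⟩ := Finset.nonempty_iff_ne_empty.2 hB
              have hxmem : x ∈ ({n} : Finset ℕ) := habs ▸ Finset.mem_insert_self x B
              have hbmem : b ∈ ({n} : Finset ℕ) := habs ▸ Finset.mem_insert_of_mem hb
              rw [Finset.mem_singleton] at hxmem hbmem
              have := hbx b hb
              omega
    · -- α = succ β
      have hβcard : β.card ≤ Cardinal.aleph0 :=
        le_trans (Ordinal.card_le_card (le_of_lt (Order.lt_succ β))) hα
      obtain ⟨hHer, hSpr, hEmp, hLB, ν', hν'b, hν'd⟩ := IH β (Order.lt_succ β) hβcard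
      have hFs : F (Order.succ β) = schreierComb F (fun _ => β) := by
        rw [← Ordinal.add_one_eq_succ]
        exact hF.2.1 β (by rwa [Ordinal.add_one_eq_succ])
      have hsne : (Order.succ β : Ordinal) ≠ 0 := (Order.succ_ne_bot β)
      have hωlim : Order.IsSuccLimit (ω ^ (Order.succ β : Ordinal)) :=
        isSuccLimit_opow_left isSuccLimit_omega0 hsne
      have hbase : ∀ (i : ℕ) (N : ℕ) lam, lam ≤ ω ^ ((fun _ : ℕ => β) i) →
          (∅ : Finset ℕ) ∈ derIter (rmin (F ((fun _ : ℕ => β) i)) N) lam := by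
        intro i N lam hlam
        exact derIter_rmin lam ∅ (hLB lam hlam) (by simp)
      have hLT : ∀ lam, lam < ω ^ (Order.succ β : Ordinal) →
          (∅ : Finset ℕ) ∈ derIter (F (Order.succ β)) lam := by
        intro lam hlam
        rw [opow_succ] at hlam
        obtain ⟨c, hcω, hlamc⟩ := (lt_mul_iff_of_isSuccLimit isSuccLimit_omega0).1 hlam
        obtain ⟨k, rfl⟩ := lt_omega0.1 hcω
        have h1 := combN_lb F k (fun _ => β) hbase (k + 1) (ω ^ β) ∅
          (hbase 0 (k + 1) _ le_rfl)
        have h2 : vsum (fun i : ℕ => (fun _ : ℕ => β) (i + 1)) k + ω ^ β =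
            ω ^ β * (k + 1 : ℕ) := by
          rw [show (fun i : ℕ => (fun _ : ℕ => β) (i + 1)) = (fun _ : ℕ => β) from rfl,
            vsum_const]
          rw [Nat.cast_succ, mul_add, mul_one]
        rw [h2] at h1
        have h3 : lam ≤ ω ^ β * (k + 1 : ℕ) := by
          refine le_trans (le_of_lt hlamc) ?_
          apply mul_le_mul_right
          rw [Nat.cast_succ]
          exact le_self_add
        have h4 := derIter_anti _ h3 h1
        have h5 := derIter_mono (combN_subset_schreier (by omega) le_rfl) lam h4
        rwa [← hFs] at h5
      refine ⟨?_, ?_, ?_, ?_, ?_⟩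
      · rw [hFs]; exact hered_comb (fun _ => hHer)
      · rw [hFs]; exact spread_comb (fun _ => hSpr)
      · rw [hFs]; exact empty_mem_comb hEmp
      · intro lam hlam
        rcases eq_or_lt_of_le hlam with rfl | hlt
        · rw [mem_derIter_limit hωlim]
          exact fun b hb => hLT b hb
        · exact hLT lam hlt
      · have hδγ : ∀ _k : ℕ, ω ^ β < ω ^ (Order.succ β : Ordinal) :=
          fun _ => (opow_lt_opow_iff_right one_lt_omega0).2 (Order.lt_succ β)
        refine cert_of_comb (Fg := fun _ => F β) (δ := fun _ => ω ^ β)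
          (ν' := fun _ => ν') hδγ (fun _ => hHer) (fun _ => hν'b) (fun _ => hν'd) ?_
        intro T hT hne
        rw [hFs] at hT
        exact isDec_of_schreier (g := fun _ => β) (fun _ => hEmp) hT hne
    · -- α limit
      obtain ⟨g, hgmono, hglt, hgsup, hFl⟩ := hF.2.2 α hα hl
      have hgcard : ∀ i, (g i).card ≤ Cardinal.aleph0 :=
        fun i => le_trans (Ordinal.card_le_card (le_of_lt (hglt i))) hα
      have IHg := fun i => IH (g i) (hglt i) (hgcard i)
      have hEmpg : ∀ i, (∅ : Finset ℕ) ∈ F (g i) := fun i => (IHg i).2.2.1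
      have hωlim : Order.IsSuccLimit (ω ^ α) := isSuccLimit_opow_left isSuccLimit_omega0 hl.pos.ne'
      have hLT : ∀ lam, lam < ω ^ α → (∅ : Finset ℕ) ∈ derIter (F α) lam := by
        intro lam hlam
        obtain ⟨b, hb, hlamb⟩ := (lt_opow_of_isSuccLimit omega0_ne_zero hl).1 hlam
        rw [← hgsup] at hb
        obtain ⟨i, hbi⟩ := Ordinal.lt_iSup_iff.1 hb
        have hlam' : lam ≤ ω ^ (g i) :=
          le_of_lt (lt_of_lt_of_le hlamb (opow_le_opow_right omega0_pos (le_of_lt hbi)))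
        have h1 : (∅ : Finset ℕ) ∈ derIter (rmin (F (g i)) (i + 1)) lam :=
          derIter_rmin lam ∅ ((IHg i).2.2.2.1 lam hlam') (by simp)
        have h2 : rmin (F (g i)) (i + 1) ⊆ F α := by
          rw [hFl]
          exact fun S hS => rmin_subset_schreier i hEmpg hS
        exact derIter_mono h2 lam h1
      refine ⟨?_, ?_, ?_, ?_, ?_⟩
      · rw [hFl]; exact hered_comb (fun i => (IHg i).1)
      · rw [hFl]; exact spread_comb (fun i => (IHg i).2.1)
      · rw [hFl]; exact empty_mem_comb (hEmpg 0)
      · intro lam hlam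
        rcases eq_or_lt_of_le hlam with rfl | hlt
        · rw [mem_derIter_limit hωlim]
          exact fun b hb => hLT b hb
        · exact hLT lam hlt
      · choose νg hνgb hνgd using fun i => (IHg i).2.2.2.2
        have hδγ : ∀ k : ℕ, ω ^ (g k) < ω ^ α :=
          fun k => (opow_lt_opow_iff_right one_lt_omega0).2 (hglt k)
        refine cert_of_comb (Fg := fun i => F (g i)) (δ := fun i => ω ^ (g i))
          (ν' := νg) hδγ (fun i => (IHg i).1) hνgb hνgd ?_
        intro T hT hne
        rw [hFl] at hT
        exact isDec_of_schreier hEmpg hT hne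

-- ## basic cbIter / oscSet unfoldings

theorem cbIter_zero {X : Type*} [TopologicalSpace X] (s : Set X) : cbIter s 0 = s :=
  Ordinal.limitRecOn_zero ..

theorem cbIter_succ {X : Type*} [TopologicalSpace X] (s : Set X) (o : Ordinal) :
    cbIter s (o + 1) = derivedSet (cbIter s o) := by
  rw [cbIter, Ordinal.add_one_eq_succ, Ordinal.limitRecOn_succ]
  rfl

theorem cbIter_limit {X : Type*} [TopologicalSpace X] (s : Set X) {o : Ordinal}
    (ho : Order.IsSuccLimit o) :
    cbIter s o = ⋂ b : {b : Ordinal.{0} // b < o}, cbIter s b.1 :=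
  Ordinal.limitRecOn_limit _ _ _ _ ho

theorem oscSet_zero {K : Type*} [TopologicalSpace K] (ε : ℝ) (f : ℕ → K → ℝ)
    (S : Set K) : oscSet ε f S 0 = S :=
  Ordinal.limitRecOn_zero ..

theorem oscSet_succ {K : Type*} [TopologicalSpace K] (ε : ℝ) (f : ℕ → K → ℝ)
    (S : Set K) (o : Ordinal) :
    oscSet ε f S (o + 1) =
      {k ∈ oscSet ε f S o | ∀ U ∈ nhds k, ∃ N : ℕ, ∀ n ≥ N, ∃ M : ℕ,
        ((⋂ m ∈ Set.Ici M, {k' : K | ε < f n k' - f m k'}) ∩ oscSet ε f S o ∩ U).Nonempty ∨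
        ((⋂ m ∈ Set.Ici M, {k' : K | f n k' - f m k' < -ε}) ∩ oscSet ε f S o ∩ U).Nonempty} := by
  rw [oscSet, Ordinal.add_one_eq_succ, Ordinal.limitRecOn_succ]
  rfl

theorem oscSet_limit {K : Type*} [TopologicalSpace K] (ε : ℝ) (f : ℕ → K → ℝ)
    (S : Set K) {o : Ordinal} (ho : Order.IsSuccLimit o) :
    oscSet ε f S o = ⋂ b : {b : Ordinal.{0} // b < o}, oscSet ε f S b.1 :=
  Ordinal.limitRecOn_limit _ _ _ _ ho

-- ## generalities on indicator functions

theorem bool_eq_of_iff {a b : Bool} (h : a = true ↔ b = true) : a = b := by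
  cases a <;> cases b <;> simp_all

theorem rep_unique {T T' : Finset ℕ} {x : ℕ → Bool}
    (h : ∀ m, x m = true ↔ m ∈ T) (h' : ∀ m, x m = true ↔ m ∈ T') : T = T' := by
  ext m
  rw [← h m, h' m]

theorem rep_decide (T : Finset ℕ) : ∀ m, (decide (m ∈ T)) = true ↔ m ∈ T := by
  intro m; simp

-- ## cylinders

def cylSet (x : ℕ → Bool) (k : ℕ) : Set (ℕ → Bool) := {y | ∀ m < k, y m = x m}

theorem cylSet_mem_nhds (x : ℕ → Bool) (k : ℕ) : cylSet x k ∈ nhds x := by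
  have heq : cylSet x k = ⋂ m : Fin k, (fun y : ℕ → Bool => y m.1) ⁻¹' {x m.1} := by
    ext y
    simp only [cylSet, Set.mem_iInter, Set.mem_preimage, Set.mem_singleton_iff,
      Set.mem_setOf_eq]
    constructor
    · intro h m; exact h m.1 m.2
    · intro h m hm; exact h ⟨m, hm⟩
  rw [heq]
  refine IsOpen.mem_nhds ?_ ?_
  · exact isOpen_iInter_of_finite fun m =>
      (continuous_apply (m.1 : ℕ)).isOpen_preimage _ (isOpen_discrete _)
  · simp

theorem exists_cyl {x : ℕ → Bool} {U : Set (ℕ → Bool)} (hU : U ∈ nhds x) :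
    ∃ k : ℕ, cylSet x k ⊆ U := by
  rw [nhds_pi, Filter.mem_pi] at hU
  obtain ⟨I, hIfin, V, hV, hVU⟩ := hU
  obtain ⟨b, hb⟩ := hIfin.bddAbove
  refine ⟨b + 1, fun y hy => hVU ?_⟩
  intro i hi
  have hib : i ≤ b := hb hi
  rw [hy i (by omega)]
  exact mem_of_mem_nhds (hV i)

-- ## closure of hereditary subfamilies

theorem closure_indFam {A G : Fam} (hG : Hered G) (hGA : G ⊆ A)
    {ν : Finset ℕ → Ordinal}
    (hν : ∀ B x, insert x B ∈ A → x ∉ B → (∀ b ∈ B, b < x) → ν (insert x B) < ν B)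
    {x : ℕ → Bool} (hx : x ∈ closure (indFam G)) :
    ∃ T ∈ G, ∀ m, x m = true ↔ m ∈ T := by
  have happrox : ∀ k : ℕ, ∃ T ∈ G, ∀ m < k, (x m = true ↔ m ∈ T) := by
    intro k
    obtain ⟨y, hyU, T, hTG, hyT⟩ := mem_closure_iff_nhds.1 hx _ (cylSet_mem_nhds x k)
    refine ⟨T, hTG, fun m hm => ?_⟩
    rw [← hyT m, hyU m hm]
  have hfin : ∀ B : Finset ℕ, (∀ b ∈ B, x b = true) → B ∈ G := by
    intro B hB
    obtain ⟨T, hTG, hT⟩ := happrox (B.sup id + 1)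
    refine hG T hTG B fun b hb => ?_
    have hble : b ≤ B.sup id := Finset.le_sup (f := id) hb
    exact (hT b (by omega)).1 (hB b hb)
  have hXfin : {m | x m = true}.Finite := by
    by_contra hinf
    have hinf' : {m | x m = true}.Infinite := hinf
    have hstep : ∀ B : Finset ℕ, (∀ b ∈ B, x b = true) →
        ∃ n, n ∉ B ∧ (∀ b ∈ B, b < n) ∧ x n = true := by
      intro B _
      obtain ⟨n, hn1, hn2⟩ := hinf'.exists_gt (B.sup id)
      refine ⟨n, ?_, fun b hb => ?_, hn1⟩
      · intro hnB
        have h : n ≤ B.sup id := Finset.le_sup (f := id) hnB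
        omega
      · have h : b ≤ B.sup id := Finset.le_sup (f := id) hb
        omega
    set W : Set Ordinal := {o | ∃ B : Finset ℕ, (∀ b ∈ B, x b = true) ∧ o = ν B} with hW
    have hWne : W.Nonempty := ⟨ν ∅, ∅, by simp, rfl⟩
    obtain ⟨B₀, hB₀, hmin⟩ := Ordinal.lt_wf.min_mem W hWne
    obtain ⟨n, hn1, hn2, hn3⟩ := hstep B₀ hB₀
    have hBall : ∀ b ∈ insert n B₀, x b = true := by
      intro b hb
      rcases Finset.mem_insert.1 hb with rfl | hb'
      · exact hn3
      · exact hB₀ b hb'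
    have hlt : ν (insert n B₀) < ν B₀ :=
      hν B₀ n (hGA (hfin _ hBall)) hn1 hn2
    rw [← hmin] at hlt
    exact Ordinal.lt_wf.not_lt_min W ⟨insert n B₀, hBall, rfl⟩ hlt
  refine ⟨hXfin.toFinset, hfin _ (fun b hb => (Set.Finite.mem_toFinset hXfin).1 hb), ?_⟩
  intro m
  rw [Set.Finite.mem_toFinset hXfin]
  rfl

-- ## derived set bridge

theorem derivedSet_indFam {A G : Fam} (hG : Hered G) (hGA : G ⊆ A)
    {ν : Finset ℕ → Ordinal}
    (hν : ∀ B x, insert x B ∈ A → x ∉ B → (∀ b ∈ B, b < x) → ν (insert x B) < ν B) :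
    derivedSet (indFam G) = indFam (der G) := by
  ext x
  constructor
  · intro hx
    obtain ⟨T, hTG, hrep⟩ :=
      closure_indFam hG hGA hν (derivedSet_subset_closure _ hx)
    refine ⟨T, ⟨hTG, fun N => ?_⟩, hrep⟩
    set k : ℕ := max N (T.sup id + 1) with hk
    obtain ⟨y, ⟨hyU, T', hT'G, hyT'⟩, hyx⟩ :=
      accPt_iff_nhds.1 hx _ (cylSet_mem_nhds x k)
    have hTsub : T ⊆ T' := by
      intro m hm
      have hmk : m < k := by
        have h : m ≤ T.sup id := Finset.le_sup (f := id) hm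
        omega
      exact (hyT' m).1 (by rw [hyU m hmk]; exact (hrep m).2 hm)
    obtain ⟨n, hn⟩ : ∃ n, y n ≠ x n := by
      by_contra hcon
      push_neg at hcon
      exact hyx (funext hcon)
    have hnk : ¬ n < k := fun hnk => hn (hyU n hnk)
    have hnT' : n ∈ T' := by
      by_contra hnT'
      have hyn : y n = false := by
        cases hyn : y n
        · rfl
        · exact absurd ((hyT' n).1 hyn) hnT'
      have hxn : x n = true := by
        cases hxn : x n
        · rw [hyn, hxn] at hn; exact absurd rfl hn
        · rfl
      have hmem : n ∈ T := (hrep n).1 hxn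
      have h : n ≤ T.sup id := Finset.le_sup (f := id) hmem
      omega
    have hnT : n ∉ T := by
      intro hnT
      have h : n ≤ T.sup id := Finset.le_sup (f := id) hnT
      omega
    refine ⟨n, by omega, fun s hs => ?_, ?_⟩
    · have h : s ≤ T.sup id := Finset.le_sup (f := id) hs
      omega
    · exact hG T' hT'G _ (Finset.insert_subset hnT' hTsub)
  · rintro ⟨T, ⟨hTG, hw⟩, hrep⟩
    rw [mem_derivedSet, accPt_iff_nhds]
    intro U hU
    obtain ⟨k, hcyl⟩ := exists_cyl hU
    obtain ⟨n, hn1, hn2, hn3⟩ := hw (max k (T.sup id + 1))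
    set y : ℕ → Bool := fun m => decide (m ∈ insert n T) with hy
    have hyU : y ∈ U := by
      apply hcyl
      intro m hm
      apply bool_eq_of_iff
      rw [hy]
      simp only [decide_eq_true_eq, Finset.mem_insert]
      rw [hrep m]
      constructor
      · rintro (rfl | h)
        · omega
        · exact h
      · intro h; exact Or.inr h
    have hins : insert n T ∈ G := hn3
    have hrepy : ∀ m, y m = true ↔ m ∈ insert n T := by
      intro m; rw [hy]; simp
    have hne : y ≠ x := by
      intro hyx
      have hcontr := congrFun hyx n
      have h1 : y n = true := (hrepy n).2 (Finset.mem_insert_self _ _)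
      have h2 : x n = false := by
        cases hxn : x n
        · rfl
        · exfalso
          have hmem := (hrep n).1 hxn
          have := hn2 n hmem
          omega
      rw [h1, h2] at hcontr
      simp at hcontr
    exact ⟨y, Set.mem_inter hyU ⟨insert n T, hins, hrepy⟩, hne⟩

-- ## cbIter = indFam ∘ derIter

theorem cbIter_eq {A : Fam} (hA : Hered A) {ν : Finset ℕ → Ordinal}
    (hν : ∀ B x, insert x B ∈ A → x ∉ B → (∀ b ∈ B, b < x) → ν (insert x B) < ν B) :
    ∀ o : Ordinal.{0}, cbIter (indFam A) o = indFam (derIter A o) := by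
  intro o
  induction o using Ordinal.induction with
  | h o IH =>
    rcases Ordinal.zero_or_succ_or_isSuccLimit o with h0 | ⟨c, rfl⟩ | hl
    · subst h0
      rw [cbIter_zero, derIter_zero]
    · rw [← Ordinal.add_one_eq_succ, cbIter_succ, derIter_succ,
        IH c (by rw [← Ordinal.add_one_eq_succ]; exact lt_add_one c)]
      exact derivedSet_indFam (hA.derIter c) ((derIter_subset A c).trans subset_rfl) hν
    · rw [cbIter_limit _ hl]
      ext x
      simp only [Set.mem_iInter]
      constructor
      · intro hx
        have h0 := hx ⟨0, hl.pos⟩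
        rw [IH 0 hl.pos, derIter_zero] at h0
        obtain ⟨T, _, hrep⟩ := h0
        refine ⟨T, ?_, hrep⟩
        rw [mem_derIter_limit hl]
        intro b hb
        have hb' := hx ⟨b, hb⟩
        rw [IH b hb] at hb'
        obtain ⟨T', hT', hrep'⟩ := hb'
        rwa [rep_unique hrep hrep']
      · rintro ⟨T, hT, hrep⟩ b
        rw [IH b.1 b.2]
        rw [mem_derIter_limit hl] at hT
        exact ⟨T, hT b.1 b.2, hrep⟩

-- ## oscillation sets = Cantor–Bendixson sets

theorem oscSet_eq {A : Fam} (hA : Hered A) (hAs : Spread A)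
    {ν : Finset ℕ → Ordinal}
    (hν : ∀ B x, insert x B ∈ A → x ∉ B → (∀ b ∈ B, b < x) → ν (insert x B) < ν B)
    {ε : ℝ} (hε : 0 < ε) (hε1 : ε < 1) :
    ∀ o : Ordinal.{0},
      oscSet ε (fun n (y : ℕ → Bool) => if y n = true then 1 else 0) (indFam A) o =
        cbIter (indFam A) o := by
  intro o
  set f : ℕ → (ℕ → Bool) → ℝ := fun n y => if y n = true then 1 else 0 with hf
  induction o using Ordinal.induction with
  | h o IH =>
    rcases Ordinal.zero_or_succ_or_isSuccLimit o with h0 | ⟨c, rfl⟩ | hl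
    · subst h0
      rw [oscSet_zero, cbIter_zero]
    · have hc : c < Order.succ c := Order.lt_succ c
      rw [← Ordinal.add_one_eq_succ, oscSet_succ, IH c hc, cbIter_succ,
        cbIter_eq hA hν c,
        derivedSet_indFam (hA.derIter c) (derIter_subset A c) hν]
      set G : Fam := derIter A c with hG
      have hGher : Hered G := hA.derIter c
      have hGspr : Spread G := hAs.derIter c
      have fval1 : ∀ (n : ℕ) (y : ℕ → Bool), y n = true → f n y = 1 := by
        intro n y h
        show (if y n = true then (1:ℝ) else 0) = 1
        rw [if_pos h]
      have fval0 : ∀ (n : ℕ) (y : ℕ → Bool), y n = false → f n y = 0 := by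
        intro n y h
        show (if y n = true then (1:ℝ) else 0) = 0
        rw [h]
        simp
      have fnonneg : ∀ (n : ℕ) (y : ℕ → Bool), 0 ≤ f n y := by
        intro n y
        show 0 ≤ (if y n = true then (1:ℝ) else 0)
        split <;> norm_num
      have notmem_of_rep : ∀ (y : ℕ → Bool) (T' : Finset ℕ),
          (∀ m, y m = true ↔ m ∈ T') → ∀ m, T'.sup id < m → y m = false := by
        intro y T' hrep' m hm
        cases hym : y m
        · rfl
        · exfalso
          have hmem := (hrep' m).1 hym
          have h : m ≤ T'.sup id := Finset.le_sup (f := id) hmem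
          omega
      ext x
      constructor
      · rintro ⟨⟨T, hTG, hrep⟩, hosc⟩
        refine ⟨T, ⟨hTG, ?_⟩, hrep⟩
        intro N
        set k : ℕ := max N (T.sup id + 1) with hk
        obtain ⟨N₁, hN₁⟩ := hosc _ (cylSet_mem_nhds x k)
        set n : ℕ := max N₁ k with hn
        obtain ⟨M, hdisj⟩ := hN₁ n (le_max_left _ _)
        rcases hdisj with ⟨y, hy⟩ | ⟨y, hy⟩
        · obtain ⟨⟨hy1, hy2⟩, hy3⟩ := hy
          obtain ⟨T', hT'G, hrep'⟩ := hy2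
          have hynT' : n ∈ T' := by
            set m₀ : ℕ := max M (T'.sup id + 1) with hm₀
            have h1 : y ∈ {k' : ℕ → Bool | ε < f n k' - f m₀ k'} :=
              Set.mem_iInter₂.1 hy1 m₀ (Set.mem_Ici.2 (le_max_left _ _))
            have h2 : f m₀ y = 0 := fval0 _ _ (notmem_of_rep y T' hrep' m₀ (by omega))
            rw [Set.mem_setOf_eq, h2, _root_.sub_zero] at h1
            cases hyn : y n
            · rw [fval0 _ _ hyn] at h1
              linarith
            · exact (hrep' n).1 hyn
          have hTsub : T ⊆ T' := by
            intro m hm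
            have hmk : m < k := by
              have h : m ≤ T.sup id := Finset.le_sup (f := id) hm
              omega
            have : y m = x m := hy3 m hmk
            exact (hrep' m).1 (by rw [this]; exact (hrep m).2 hm)
          have hsupT : ∀ s ∈ T, s < n := by
            intro s hs
            have h : s ≤ T.sup id := Finset.le_sup (f := id) hs
            omega
          refine ⟨n, by omega, hsupT, ?_⟩
          exact hGher T' hT'G _ (Finset.insert_subset hynT' hTsub)
        · exfalso
          obtain ⟨⟨hy1, hy2⟩, _⟩ := hy
          obtain ⟨T', _, hrep'⟩ := hy2
          set m₀ : ℕ := max M (T'.sup id + 1) with hm₀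
          have h1 : y ∈ {k' : ℕ → Bool | f n k' - f m₀ k' < -ε} :=
            Set.mem_iInter₂.1 hy1 m₀ (Set.mem_Ici.2 (le_max_left _ _))
          have h2 : f m₀ y = 0 := fval0 _ _ (notmem_of_rep y T' hrep' m₀ (by omega))
          rw [Set.mem_setOf_eq, h2, _root_.sub_zero] at h1
          have := fnonneg n y
          linarith
      · rintro ⟨T, ⟨hTG, hw⟩, hrep⟩
        refine ⟨⟨T, hTG, hrep⟩, ?_⟩
        intro U hU
        obtain ⟨k, hcyl⟩ := exists_cyl hU
        obtain ⟨n₀, hn₀ge, hn₀s, hn₀mem⟩ := hw (max k (T.sup id + 1))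
        refine ⟨n₀, fun n hn => ⟨n + 1, Or.inl ?_⟩⟩
        set y : ℕ → Bool := fun m => decide (m ∈ insert n T) with hy
        have hrepy : ∀ m, y m = true ↔ m ∈ insert n T := by
          intro m; rw [hy]; simp
        have hinsmem : insert n T ∈ G := hGspr.insert_ge hn₀mem hn₀s hn
        refine ⟨y, ⟨?_, insert n T, hinsmem, hrepy⟩, ?_⟩
        · rw [Set.mem_iInter₂]
          intro m hm
          rw [Set.mem_setOf_eq]
          have h1 : f n y = 1 := fval1 _ _ ((hrepy n).2 (Finset.mem_insert_self _ _))
          have h2 : f m y = 0 := by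
            apply fval0
            cases hym : y m
            · rfl
            · exfalso
              rcases Finset.mem_insert.1 ((hrepy m).1 hym) with rfl | hmT
              · rw [Set.mem_Ici] at hm
                omega
              · have h : m ≤ T.sup id := Finset.le_sup (f := id) hmT
                rw [Set.mem_Ici] at hm
                omega
          rw [h1, h2, _root_.sub_zero]
          exact hε1
        · apply hcyl
          intro m hm
          apply bool_eq_of_iff
          rw [hrepy m, hrep m, Finset.mem_insert]
          constructor
          · rintro (rfl | h)
            · omega
            · exact h
          · exact fun h => Or.inr h
    · rw [oscSet_limit _ _ _ hl, cbIter_limit _ hl]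
      exact Set.iInter_congr fun b => IH b.1 b.2

end S18

open S18

/-- for the generalized Schreier sequence
`x^α_n(F) = 1_F(n)` on `𝓕_α`, the oscillation sets coincide with the
Cantor–Bendixson derived sets for every `0 < ε < 1`; in particular
`𝓞^{ω^α}(ε) = {∅} ≠ ∅`, so the oscillation index is `ω^α`.  The key step:
if `F ∈ 𝓕_α^{(λ+1)}` then `F ∪ {n} ∈ 𝓕_α^{(λ)}` for all large `n`. -/
theorem stmt_18 (F : Ordinal → Set (Finset ℕ)) (hF : SchreierSystem F)
    (α : Ordinal.{0}) (hα : α.card ≤ Cardinal.aleph0)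
    (ε : ℝ) (hε : 0 < ε) (hε1 : ε < 1) :
    (∀ lam : Ordinal.{0},
      oscSet ε (fun n (y : ℕ → Bool) => if y n = true then 1 else 0)
        (indFam (F α)) lam = cbIter (indFam (F α)) lam) ∧
    oscSet ε (fun n (y : ℕ → Bool) => if y n = true then 1 else 0)
      (indFam (F α)) (Ordinal.omega0 ^ α) = {fun _ => false} ∧
    (∀ (lam : Ordinal.{0}) (S : Finset ℕ),
      (fun m => decide (m ∈ S)) ∈ cbIter (indFam (F α)) (lam + 1) →
      ∃ N : ℕ, ∀ n ≥ N,
        (fun m => decide (m ∈ insert n S)) ∈ cbIter (indFam (F α)) lam) := by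
  obtain ⟨hHer, hSpr, hEmp, hLB, ν, hνb, hνd⟩ := main F hF α hα
  have hosc := oscSet_eq hHer hSpr hνd hε hε1
  have hub : ∀ lam : Ordinal.{0}, ∀ T : Finset ℕ,
      T ∈ derIter (F α) lam → T ≠ ∅ → lam ≤ ν T := by
    intro lam
    induction lam using Ordinal.induction with
    | h lam IH =>
      intro T hT hTne
      rcases Ordinal.zero_or_succ_or_isSuccLimit lam with h0 | ⟨c, rfl⟩ | hl
      · subst h0; exact zero_le
      · rw [← Ordinal.add_one_eq_succ] at *
        rw [derIter_succ] at hT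
        obtain ⟨hT1, hw⟩ := hT
        obtain ⟨n, hn, hs, hmem'⟩ := hw 0
        have h1 : c ≤ ν (insert n T) :=
          IH c (lt_add_one c) _ hmem' (Finset.insert_ne_empty _ _)
        have h2 : ν (insert n T) < ν T := by
          refine hνd T n (derIter_subset _ _ hmem') ?_ hs
          intro hnT
          exact absurd (hs n hnT) (lt_irrefl n)
        rw [Ordinal.add_one_eq_succ, Order.succ_le_iff]
        exact lt_of_le_of_lt h1 h2
      · by_contra hcon
        push_neg at hcon
        have hsucc : Order.succ (ν T) < lam := hl.succ_lt hcon
        have := IH _ hsucc T (derIter_anti _ (le_of_lt hsucc) hT) hTne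
        exact absurd this (by simp [Order.succ_le_iff])
  have hset : derIter (F α) (Ordinal.omega0 ^ α) = {∅} := by
    apply Set.eq_singleton_iff_unique_mem.2
    refine ⟨hLB _ le_rfl, ?_⟩
    intro S hS
    by_contra hSne
    have h1 := hub _ S hS hSne
    have h2 := hνb S (derIter_subset _ _ hS) hSne
    exact absurd h1 (not_le.2 h2)
  refine ⟨hosc, ?_, ?_⟩
  · rw [hosc, cbIter_eq hHer hνd, hset]
    ext x
    constructor
    · rintro ⟨T, hT, hrep⟩
      rw [Set.mem_singleton_iff] at hT
      subst hT
      rw [Set.mem_singleton_iff]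
      funext m
      cases hxm : x m
      · rfl
      · exact absurd ((hrep m).1 hxm) (Finset.notMem_empty m)
    · intro hx
      rw [Set.mem_singleton_iff] at hx
      subst hx
      exact ⟨∅, rfl, by simp⟩
  · intro lam S hmem
    rw [cbIter_eq hHer hνd] at hmem
    obtain ⟨T, hT, hrep⟩ := hmem
    have hTS : T = S := by
      ext m
      rw [← hrep m]
      simp
    subst hTS
    rw [derIter_succ] at hT
    obtain ⟨hT1, hw⟩ := hT
    obtain ⟨n₀, hn₀, hs, hmem'⟩ := hw (T.sup id + 1)
    refine ⟨n₀, fun n hn => ?_⟩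
    rw [cbIter_eq hHer hνd]
    exact ⟨insert n T, (hSpr.derIter lam).insert_ge hmem' hs hn, by simp⟩
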